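/- Let G be a connected graph and L a list-assignment with |L(v)| ≥ deg(v)+1 for all vertices v and |L(w)| ≥ deg(w)+2 for at least one vertex w. Then the reconfiguration graph C(G,L) of proper L-colourings (with edges joining colourings differing by a single-vertex recolouring) is connected. -/

import Mathlib

/-- A proper list colouring. -/
def properL {V : Type*} (G : SimpleGraph V) (L : V → Finset ℕ) (c : V → ℕ) : Prop :=
  (∀ v, c v ∈ L v) ∧ ∀ ⦃u w⦄, G.Adj u w → c u ≠ c w

/-- A single-vertex recolouring step between proper `L`-colourings:
they differ at exactly one vertex. -/
def recolStep {V : Type*} (G : SimpleGraph V) (L : V → Finset ℕ) (c c' : V → ℕ) : Prop :=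
  properL G L c ∧ properL G L c' ∧ ∃ x, c x ≠ c' x ∧ ∀ u, u ≠ x → c u = c' u

namespace StmtFiveAux

lemma ncard_induce {V : Type*} [Fintype V] (G : SimpleGraph V) (w : V)
    (x : {v : V // v ≠ w}) :
    ((G.comap (Subtype.val : {v : V // v ≠ w} → V)).neighborSet x).ncard
      = ((G.neighborSet x.1) \ {w}).ncard := by
  rw [← Set.ncard_image_of_injective _ Subtype.val_injective]
  congr 1
  ext u
  simp only [SimpleGraph.mem_neighborSet, SimpleGraph.comap_adj, Set.mem_image,
    Set.mem_diff, Set.mem_singleton_iff, Subtype.exists]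
  constructor
  · rintro ⟨a, ha, hadj, rfl⟩; exact ⟨hadj, ha⟩
  · rintro ⟨hadj, hne⟩; exact ⟨u, hne, hadj, rfl⟩

lemma update_proper {V : Type*} [DecidableEq V] {G : SimpleGraph V} {L : V → Finset ℕ}
    {c : V → ℕ} (hc : properL G L c) (x : V) (a : ℕ) (haL : a ∈ L x)
    (hnb : ∀ u, G.Adj x u → c u ≠ a) : properL G L (Function.update c x a) := by
  constructor
  · intro v
    by_cases hv : v = x
    · subst hv; rw [Function.update_self]; exact haL
    · rw [Function.update_of_ne hv]; exact hc.1 v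
  · intro u v huv
    by_cases hu : u = x <;> by_cases hv : v = x
    · subst hu hv; exact absurd huv (G.irrefl)
    · subst hu
      rw [Function.update_self, Function.update_of_ne hv]
      exact fun h => hnb v huv h.symm
    · subst hv
      rw [Function.update_self, Function.update_of_ne hu]
      exact hnb u huv.symm
    · rw [Function.update_of_ne hu, Function.update_of_ne hv]; exact hc.2 huv

section Lift

variable {V : Type*} [Fintype V] {G : SimpleGraph V} {L : V → Finset ℕ} {w : V}

/-- Lift a single recolouring step of `G - w` to the full graph, possibly
    first dodging `w` out of the way. -/
lemma lift_step (hw : (G.neighborSet w).ncard + 2 ≤ (L w).card)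
    {c : V → ℕ} {c' m' : {v : V // v ≠ w} → ℕ}
    (hc : properL G L c) (hmatch : ∀ x : {v : V // v ≠ w}, c x.1 = c' x)
    (hstep : recolStep (G.comap (Subtype.val : {v : V // v ≠ w} → V))
      (fun x : {v : V // v ≠ w} => L x.1) c' m') :
    ∃ m : V → ℕ, properL G L m ∧ (∀ x : {v : V // v ≠ w}, m x.1 = m' x) ∧
      Relation.ReflTransGen (recolStep G L) c m := by
  classical
  obtain ⟨hc', hm', x', hx'ne, hx'eq⟩ := hstep
  set a := m' x' with ha
  -- the final update, assuming `w` is out of the way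
  have key : ∀ c₁ : V → ℕ, properL G L c₁ → (∀ x : {v : V // v ≠ w}, c₁ x.1 = c' x) →
      (G.Adj x'.1 w → c₁ w ≠ a) →
      ∃ m : V → ℕ, properL G L m ∧ (∀ x : {v : V // v ≠ w}, m x.1 = m' x) ∧
        recolStep G L c₁ m := by
    intro c₁ hc₁ hm₁ hdodge
    have hnb : ∀ u, G.Adj x'.1 u → c₁ u ≠ a := by
      intro u hadj
      by_cases huw : u = w
      · subst huw; exact hdodge hadj
      · have hux : (⟨u, huw⟩ : {v : V // v ≠ w}) ≠ x' := by
          intro h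
          exact G.ne_of_adj hadj.symm (congrArg Subtype.val h)
        have hadj' : (G.comap (Subtype.val : {v : V // v ≠ w} → V)).Adj x' ⟨u, huw⟩ := hadj
        have h2 := hm'.2 hadj'
        rw [← hx'eq ⟨u, huw⟩ hux, ← hm₁ ⟨u, huw⟩] at h2
        exact fun h => h2 h.symm
    have hmp : properL G L (Function.update c₁ x'.1 a) :=
      update_proper hc₁ x'.1 a (hm'.1 x') hnb
    refine ⟨Function.update c₁ x'.1 a, hmp, ?_, ?_⟩
    · intro x
      by_cases hx : x = x'
      · subst hx; rw [Function.update_self]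
      · rw [Function.update_of_ne (fun h => hx (Subtype.ext h)), hm₁ x, hx'eq x hx]
    · refine ⟨hc₁, hmp, x'.1, ?_, ?_⟩
      · rw [Function.update_self, hm₁ x']; exact hx'ne
      · intro u hu; rw [Function.update_of_ne hu]
  by_cases hcase : G.Adj x'.1 w ∧ c w = a
  · -- dodge `w` first
    obtain ⟨hadjw, hcw⟩ := hcase
    have hNfin : (G.neighborSet w).Finite := Set.toFinite _
    have hex : ∃ b ∈ (L w : Set ℕ), b ∉ (c '' G.neighborSet w) ∪ {a} := by
      by_contra h
      push_neg at h
      have hFfin : ((c '' G.neighborSet w) ∪ {a} : Set ℕ).Finite :=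
        (hNfin.image c).union (Set.finite_singleton a)
      have hle := Set.ncard_le_ncard (h : (↑(L w) : Set ℕ) ⊆ _) hFfin
      have h2 := Set.ncard_union_le (c '' G.neighborSet w) ({a} : Set ℕ)
      have h3 := Set.ncard_image_le (s := G.neighborSet w) (f := c) hNfin
      rw [Set.ncard_coe_finset] at hle
      have h4 : ({a} : Set ℕ).ncard = 1 := Set.ncard_singleton a
      omega
    obtain ⟨b, hbL, hbF⟩ := hex
    have hbNe : ∀ u, G.Adj w u → c u ≠ b := by
      intro u hu h
      exact hbF (Or.inl ⟨u, hu, h⟩)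
    have hba : b ≠ a := fun h => hbF (Or.inr (by simp [h]))
    have hc₁ : properL G L (Function.update c w b) := update_proper hc w b hbL hbNe
    have hm₁ : ∀ x : {v : V // v ≠ w}, (Function.update c w b) x.1 = c' x := by
      intro x; rw [Function.update_of_ne x.2]; exact hmatch x
    have hstep1 : recolStep G L c (Function.update c w b) := by
      refine ⟨hc, hc₁, w, ?_, ?_⟩
      · rw [Function.update_self, hcw]; exact fun h => hba h.symm
      · intro u hu; rw [Function.update_of_ne hu]
    obtain ⟨m, hm, hmm, hsm⟩ := key (Function.update c w b) hc₁ hm₁ (by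
      intro _
      rw [Function.update_self]; exact hba)
    exact ⟨m, hm, hmm, Relation.ReflTransGen.head hstep1 (Relation.ReflTransGen.single hsm)⟩
  · obtain ⟨m, hm, hmm, hsm⟩ := key c hc hmatch (fun hadj hcw => hcase ⟨hadj, hcw⟩)
    exact ⟨m, hm, hmm, Relation.ReflTransGen.single hsm⟩

/-- Lift a whole reconfiguration path of `G - w`. -/
lemma lift (hw : (G.neighborSet w).ncard + 2 ≤ (L w).card)
    {c' d' : {v : V // v ≠ w} → ℕ}
    (h : Relation.ReflTransGen
      (recolStep (G.comap (Subtype.val : {v : V // v ≠ w} → V))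
        (fun x : {v : V // v ≠ w} => L x.1)) c' d') :
    ∀ c : V → ℕ, properL G L c → (∀ x : {v : V // v ≠ w}, c x.1 = c' x) →
    ∃ d : V → ℕ, properL G L d ∧ (∀ x : {v : V // v ≠ w}, d x.1 = d' x) ∧
      Relation.ReflTransGen (recolStep G L) c d := by
  induction h using Relation.ReflTransGen.head_induction_on with
  | refl => exact fun c hc hm => ⟨c, hc, hm, Relation.ReflTransGen.refl⟩
  | head s r ih =>
    intro c hc hm
    obtain ⟨m, hmp, hmm, hsm⟩ := lift_step hw hc hm s
    obtain ⟨d, hd, hdd, hsd⟩ := ih m hmp hmm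
    exact ⟨d, hd, hdd, hsm.trans hsd⟩

end Lift

/-- Every vertex of `G - w` can reach (inside `G - w`) a vertex with slack two. -/
lemma walk_lemma {V : Type*} [Fintype V] {G : SimpleGraph V} {L : V → Finset ℕ} (w : V)
    (h1 : ∀ v, (G.neighborSet v).ncard + 1 ≤ (L v).card)
    {b z : V} (p : G.Walk b z) :
    ∀ (hb : b ≠ w), (G.neighborSet z).ncard + 2 ≤ (L z).card →
      ∃ z' : {v : V // v ≠ w},
        (G.comap (Subtype.val : {v : V // v ≠ w} → V)).Reachable ⟨b, hb⟩ z' ∧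
        ((G.comap (Subtype.val : {v : V // v ≠ w} → V)).neighborSet z').ncard + 2
          ≤ (L z'.1).card := by
  induction p with
  | @nil u =>
    intro hb hz
    refine ⟨⟨u, hb⟩, SimpleGraph.Reachable.refl _, ?_⟩
    rw [ncard_induce]
    show ((G.neighborSet u) \ {w}).ncard + 2 ≤ (L u).card
    have hle : ((G.neighborSet u) \ {w}).ncard ≤ (G.neighborSet u).ncard :=
      Set.ncard_le_ncard Set.diff_subset (Set.toFinite _)
    omega
  | @cons b c z hadj p ih =>
    intro hb hz
    by_cases hcw : c = w
    · have hadjw : G.Adj b w := hcw ▸ hadj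
      refine ⟨⟨b, hb⟩, SimpleGraph.Reachable.refl _, ?_⟩
      rw [ncard_induce]
      show ((G.neighborSet b) \ {w}).ncard + 2 ≤ (L b).card
      have hmem : w ∈ G.neighborSet b := hadjw
      have hpos : 0 < (G.neighborSet b).ncard :=
        (Set.ncard_pos (Set.toFinite _)).mpr ⟨w, hmem⟩
      rw [Set.ncard_diff_singleton_of_mem hmem]
      have := h1 b
      omega
    · obtain ⟨z', hr, hs⟩ := ih hcw hz
      have hadj' : (G.comap (Subtype.val : {v : V // v ≠ w} → V)).Adj ⟨b, hb⟩ ⟨c, hcw⟩ := hadj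
      exact ⟨z', hadj'.reachable.trans hr, hs⟩

lemma aux : ∀ (n : ℕ) (V : Type u) [Fintype V] (G : SimpleGraph V) (L : V → Finset ℕ),
    Fintype.card V = n →
    (∀ v, (G.neighborSet v).ncard + 1 ≤ (L v).card) →
    (∀ v, ∃ z, G.Reachable v z ∧ (G.neighborSet z).ncard + 2 ≤ (L z).card) →
    ∀ α β : V → ℕ, properL G L α → properL G L β →
      Relation.ReflTransGen (recolStep G L) α β := by
  intro n
  induction n using Nat.strong_induction_on with
  | _ n IH =>
    intro V _ G L hcard h1 h2 α β hα hβ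
    classical
    by_cases hV : IsEmpty V
    · have : α = β := funext fun v => (hV.false v).elim
      subst this; exact Relation.ReflTransGen.refl
    · rw [not_isEmpty_iff] at hV
      obtain ⟨w, -, hw⟩ := h2 (Classical.arbitrary V)
      have hn1 : 1 ≤ n := by
        rw [← hcard]; exact Fintype.card_pos
      have hcard' : Fintype.card {v : V // v ≠ w} = n - 1 := by
        have h := Fintype.card_subtype_compl (fun v : V => v = w)
        simp only [Fintype.card_subtype_eq] at h
        calc Fintype.card {v : V // v ≠ w}
            = Fintype.card {v : V // ¬ v = w} := rfl
          _ = Fintype.card V - 1 := h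
          _ = n - 1 := by rw [hcard]
      have h1' : ∀ x : {v : V // v ≠ w},
          ((G.comap (Subtype.val : {v : V // v ≠ w} → V)).neighborSet x).ncard + 1
            ≤ (L x.1).card := by
        intro x
        rw [ncard_induce]
        have hle : ((G.neighborSet x.1) \ {w}).ncard ≤ (G.neighborSet x.1).ncard :=
          Set.ncard_le_ncard Set.diff_subset (Set.toFinite _)
        have := h1 x.1
        omega
      have h2' : ∀ x : {v : V // v ≠ w}, ∃ z',
          (G.comap (Subtype.val : {v : V // v ≠ w} → V)).Reachable x z' ∧
          ((G.comap (Subtype.val : {v : V // v ≠ w} → V)).neighborSet z').ncard + 2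
            ≤ (L z'.1).card := by
        intro x
        obtain ⟨z, hreach, hz⟩ := h2 x.1
        obtain ⟨p⟩ := hreach
        obtain ⟨z', hr, hs⟩ := walk_lemma w h1 p x.2 hz
        exact ⟨z', hr, hs⟩
      have hα' : properL (G.comap (Subtype.val : {v : V // v ≠ w} → V))
          (fun x : {v : V // v ≠ w} => L x.1) (fun x => α x.1) :=
        ⟨fun x => hα.1 x.1, fun u v h => hα.2 h⟩
      have hβ' : properL (G.comap (Subtype.val : {v : V // v ≠ w} → V))
          (fun x : {v : V // v ≠ w} => L x.1) (fun x => β x.1) :=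
        ⟨fun x => hβ.1 x.1, fun u v h => hβ.2 h⟩
      have hpath' := IH (n-1) (by omega) {v : V // v ≠ w}
        (G.comap (Subtype.val : {v : V // v ≠ w} → V))
        (fun x : {v : V // v ≠ w} => L x.1) hcard' h1' h2'
        (fun x => α x.1) (fun x => β x.1) hα' hβ'
      obtain ⟨d, hd, hdd, hsd⟩ := lift hw hpath' α hα (fun _ => rfl)
      by_cases hdw : d w = β w
      · have : d = β := funext fun v => by
          by_cases hv : v = w
          · subst hv; exact hdw
          · exact hdd ⟨v, hv⟩
        rw [← this]; exact hsd
      · exact hsd.tail ⟨hd, hβ, w, hdw, fun u hu => hdd ⟨u, hu⟩⟩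

end StmtFiveAux

theorem stmt5 {V : Type*} [Fintype V] (G : SimpleGraph V) (hG : G.Connected)
    (L : V → Finset ℕ)
    (h1 : ∀ v, (G.neighborSet v).ncard + 1 ≤ (L v).card)
    (h2 : ∃ w, (G.neighborSet w).ncard + 2 ≤ (L w).card)
    (α β : V → ℕ) (hα : properL G L α) (hβ : properL G L β) :
    Relation.ReflTransGen (recolStep G L) α β := by
  obtain ⟨w, hw⟩ := h2
  exact StmtFiveAux.aux (Fintype.card V) V G L rfl h1
    (fun v => ⟨w, hG.preconnected v w, hw⟩) α β hα hβ
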